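/- The function f* = n_l·f_l + n_m·f_m, where n_l = −λ₂ / √((λ₂a₁+λ₄ρ_m b₁)² + (λ₂a₂)²) and n_m = −λ₄ρ_m b₁ / √((λ₂a₁+λ₄ρ_m b₁)² + (λ₂a₂)²), belongs to 𝓛(P_{X|S=0}) and minimizes Δ_λ(f) over all f ∈ 𝓛(P_{X|S=0}), i.e., Δ_λ(f*) ≤ Δ_λ(f) for every f ∈ 𝓛(P_{X|S=0}). -/

import Mathlib

open Filter Topology

/-- Kullback–Leibler divergence between distributions on a finite set. -/
noncomputable def KLdiv {α : Type*} [Fintype α] (P Q : α → ℝ) : ℝ :=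
  ∑ a, P a * Real.log (P a / Q a)

/-- The objective `L_λ` evaluated at the perturbed distribution
`P̃_{X|S=0}(x) = P0(x)(1+εf(x))`, with `P̃_{Y|S=0} = W ∘ P̃_{X|S=0}`.
At `ε = 0` this is `L_λ(P_{X|S=0})`. -/
noncomputable def Lobj {𝒳 : Type*} [Fintype 𝒳]
    (P0 P1 : 𝒳 → ℝ) (W : 𝒳 → Bool → ℝ) (Q0 Q1 : Bool → ℝ)
    (l1 l2 l3 l4 : ℝ) (f : 𝒳 → ℝ) (ε : ℝ) : ℝ :=
  l1 * KLdiv (fun x => P0 x * (1 + ε * f x)) P0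
    + l2 * KLdiv (fun x => P0 x * (1 + ε * f x)) P1
    + l3 * KLdiv (fun y => ∑ x, P0 x * (1 + ε * f x) * W x y) Q0
    + l4 * KLdiv (fun y => ∑ x, P0 x * (1 + ε * f x) * W x y) Q1

/- ## Auxiliary lemmas -/

lemma aux_deriv (c d r : ℝ) (hc : 0 < c) (hr : 0 < r) :
    HasDerivAt (fun ε : ℝ => (c + ε * d) * Real.log ((c + ε * d) / r))
      (d * (Real.log (c / r) + 1)) 0 := by
  have hu : HasDerivAt (fun ε : ℝ => c + ε * d) d 0 := by
    simpa using ((hasDerivAt_id (0:ℝ)).mul_const d).const_add c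
  have hv : HasDerivAt (fun ε : ℝ => (c + ε * d) / r) (d / r) 0 := hu.div_const r
  have hne : (c + 0 * d) / r ≠ 0 := by
    have : (c + 0 * d) / r = c / r := by ring
    rw [this]; positivity
  have hlog : HasDerivAt (fun ε : ℝ => Real.log ((c + ε * d) / r))
      ((d / r) / ((c + 0 * d) / r)) 0 := hv.log hne
  have hmul := hu.fun_mul hlog
  refine hmul.congr_deriv ?_
  have hcr : c + 0 * d = c := by ring
  rw [hcr]
  field_simp

lemma sum_comb {𝒳 : Type*} [Fintype 𝒳] (P u v : 𝒳 → ℝ) (a b : ℝ) :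
    ∑ x, P x * (a * u x + b * v x)
      = a * ∑ x, P x * u x + b * ∑ x, P x * v x := by
  rw [Finset.mul_sum, Finset.mul_sum, ← Finset.sum_add_distrib]
  apply Finset.sum_congr rfl
  intro x _; ring

lemma sum_sq_comb {𝒳 : Type*} [Fintype 𝒳] (P u v : 𝒳 → ℝ) (a b : ℝ) :
    ∑ x, P x * (a * u x + b * v x) ^ 2
      = a ^ 2 * ∑ x, P x * u x ^ 2 + 2 * a * b * ∑ x, P x * (u x * v x)
        + b ^ 2 * ∑ x, P x * v x ^ 2 := by
  rw [Finset.mul_sum, Finset.mul_sum, Finset.mul_sum, ← Finset.sum_add_distrib,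
    ← Finset.sum_add_distrib]
  apply Finset.sum_congr rfl
  intro x _; ring

lemma sum_mul_comb {𝒳 : Type*} [Fintype 𝒳] (P u v w : 𝒳 → ℝ) (a b : ℝ) :
    ∑ x, P x * ((a * u x + b * v x) * w x)
      = a * ∑ x, P x * (u x * w x) + b * ∑ x, P x * (v x * w x) := by
  rw [Finset.mul_sum, Finset.mul_sum, ← Finset.sum_add_distrib]
  apply Finset.sum_congr rfl
  intro x _; ring

/-- The one-sided derivative of `Lobj` at `ε = 0` for a centered direction `f`. -/
lemma lobj_tendsto {𝒳 : Type*} [Fintype 𝒳]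
    (P0 P1 : 𝒳 → ℝ)
    (hP0pos : ∀ x, 0 < P0 x)
    (hP1pos : ∀ x, 0 < P1 x)
    (W : 𝒳 → Bool → ℝ)
    (hWsum : ∀ x, W x false + W x true = 1)
    (Q0 Q1 : Bool → ℝ)
    (hQ0 : ∀ y, Q0 y = ∑ x, P0 x * W x y)
    (hQ0pos : ∀ y, 0 < Q0 y) (hQ1pos : ∀ y, 0 < Q1 y)
    (l1 l2 l3 l4 : ℝ)
    (f : 𝒳 → ℝ) (hf0 : ∑ x, P0 x * f x = 0) :
    Tendsto
      (fun ε : ℝ =>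
        (Lobj P0 P1 W Q0 Q1 l1 l2 l3 l4 f ε - Lobj P0 P1 W Q0 Q1 l1 l2 l3 l4 f 0) / ε)
      (nhdsWithin 0 (Set.Ioi 0))
      (nhds (l2 * ∑ x, P0 x * f x * Real.log (P0 x / P1 x)
        + l4 * ∑ y, (∑ x, P0 x * f x * W x y) * Real.log (Q0 y / Q1 y))) := by
  have hQε : ∀ (ε : ℝ) (y : Bool),
      (∑ x, P0 x * (1 + ε * f x) * W x y)
        = Q0 y + ε * ∑ x, P0 x * f x * W x y := by
    intro ε y
    rw [hQ0, Finset.mul_sum, ← Finset.sum_add_distrib]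
    apply Finset.sum_congr rfl
    intro x _
    ring
  have hGeq : (fun ε : ℝ => Lobj P0 P1 W Q0 Q1 l1 l2 l3 l4 f ε)
      = fun ε : ℝ =>
        l1 * ∑ x, (P0 x + ε * (P0 x * f x)) * Real.log ((P0 x + ε * (P0 x * f x)) / P0 x)
        + l2 * ∑ x, (P0 x + ε * (P0 x * f x)) * Real.log ((P0 x + ε * (P0 x * f x)) / P1 x)
        + l3 * ∑ y, (Q0 y + ε * ∑ x, P0 x * f x * W x y) *
            Real.log ((Q0 y + ε * ∑ x, P0 x * f x * W x y) / Q0 y)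
        + l4 * ∑ y, (Q0 y + ε * ∑ x, P0 x * f x * W x y) *
            Real.log ((Q0 y + ε * ∑ x, P0 x * f x * W x y) / Q1 y) := by
    funext ε
    simp only [Lobj, KLdiv]
    have hx : ∀ (R : 𝒳 → ℝ),
        ∑ a, (P0 a * (1 + ε * f a)) * Real.log ((P0 a * (1 + ε * f a)) / R a)
          = ∑ a, (P0 a + ε * (P0 a * f a)) * Real.log ((P0 a + ε * (P0 a * f a)) / R a) := by
      intro R
      apply Finset.sum_congr rfl
      intro x _
      rw [show P0 x * (1 + ε * f x) = P0 x + ε * (P0 x * f x) from by ring]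
    have hy : ∀ (R : Bool → ℝ),
        ∑ a, (∑ x, P0 x * (1 + ε * f x) * W x a)
            * Real.log ((∑ x, P0 x * (1 + ε * f x) * W x a) / R a)
          = ∑ a, (Q0 a + ε * ∑ x, P0 x * f x * W x a) *
              Real.log ((Q0 a + ε * ∑ x, P0 x * f x * W x a) / R a) := by
      intro R
      apply Finset.sum_congr rfl
      intro y _
      rw [hQε]
    rw [hx P0, hx P1, hy Q0, hy Q1]
  have hD : HasDerivAt (fun ε : ℝ => Lobj P0 P1 W Q0 Q1 l1 l2 l3 l4 f ε)
      (l1 * ∑ x, (P0 x * f x) * (Real.log (P0 x / P0 x) + 1)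
        + l2 * ∑ x, (P0 x * f x) * (Real.log (P0 x / P1 x) + 1)
        + l3 * ∑ y, (∑ x, P0 x * f x * W x y) * (Real.log (Q0 y / Q0 y) + 1)
        + l4 * ∑ y, (∑ x, P0 x * f x * W x y) * (Real.log (Q0 y / Q1 y) + 1)) 0 := by
    rw [hGeq]
    refine (((((HasDerivAt.fun_sum ?_).const_mul l1).add
      ((HasDerivAt.fun_sum ?_).const_mul l2)).add
      ((HasDerivAt.fun_sum ?_).const_mul l3)).add
      ((HasDerivAt.fun_sum ?_).const_mul l4))
    · intro x _; exact aux_deriv (P0 x) (P0 x * f x) (P0 x) (hP0pos x) (hP0pos x)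
    · intro x _; exact aux_deriv (P0 x) (P0 x * f x) (P1 x) (hP0pos x) (hP1pos x)
    · intro y _; exact aux_deriv (Q0 y) _ (Q0 y) (hQ0pos y) (hQ0pos y)
    · intro y _; exact aux_deriv (Q0 y) _ (Q1 y) (hQ0pos y) (hQ1pos y)
  have hval : (l1 * ∑ x, (P0 x * f x) * (Real.log (P0 x / P0 x) + 1)
        + l2 * ∑ x, (P0 x * f x) * (Real.log (P0 x / P1 x) + 1)
        + l3 * ∑ y, (∑ x, P0 x * f x * W x y) * (Real.log (Q0 y / Q0 y) + 1)
        + l4 * ∑ y, (∑ x, P0 x * f x * W x y) * (Real.log (Q0 y / Q1 y) + 1))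
      = l2 * ∑ x, P0 x * f x * Real.log (P0 x / P1 x)
        + l4 * ∑ y, (∑ x, P0 x * f x * W x y) * Real.log (Q0 y / Q1 y) := by
    have hsumW : ∑ y, (∑ x, P0 x * f x * W x y) = 0 := by
      rw [Fintype.sum_bool, ← Finset.sum_add_distrib]
      rw [show (0:ℝ) = ∑ x, P0 x * f x from hf0.symm]
      apply Finset.sum_congr rfl
      intro x _
      linear_combination (P0 x * f x) * hWsum x
    have h1 : ∑ x, (P0 x * f x) * (Real.log (P0 x / P0 x) + 1) = 0 := by
      rw [← hf0]
      apply Finset.sum_congr rfl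
      intro x _
      rw [div_self (hP0pos x).ne', Real.log_one]
      ring
    have h2 : ∑ x, (P0 x * f x) * (Real.log (P0 x / P1 x) + 1)
        = ∑ x, P0 x * f x * Real.log (P0 x / P1 x) := by
      have : ∑ x, (P0 x * f x) * (Real.log (P0 x / P1 x) + 1)
          = (∑ x, P0 x * f x * Real.log (P0 x / P1 x)) + ∑ x, P0 x * f x := by
        rw [← Finset.sum_add_distrib]
        apply Finset.sum_congr rfl
        intro x _; ring
      rw [this, hf0, add_zero]
    have h3 : ∑ y, (∑ x, P0 x * f x * W x y) * (Real.log (Q0 y / Q0 y) + 1) = 0 := by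
      rw [← hsumW]
      apply Finset.sum_congr rfl
      intro y _
      rw [div_self (hQ0pos y).ne', Real.log_one]
      ring
    have h4 : ∑ y, (∑ x, P0 x * f x * W x y) * (Real.log (Q0 y / Q1 y) + 1)
        = ∑ y, (∑ x, P0 x * f x * W x y) * Real.log (Q0 y / Q1 y) := by
      have : ∑ y, (∑ x, P0 x * f x * W x y) * (Real.log (Q0 y / Q1 y) + 1)
          = (∑ y, (∑ x, P0 x * f x * W x y) * Real.log (Q0 y / Q1 y))
            + ∑ y, (∑ x, P0 x * f x * W x y) := by
        rw [← Finset.sum_add_distrib]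
        apply Finset.sum_congr rfl
        intro y _; ring
      rw [this, hsumW, add_zero]
    rw [h1, h2, h3, h4]
    ring
  rw [hval] at hD
  have hT := hasDerivAt_iff_tendsto_slope.mp hD
  have h2 := hT.mono_left (nhdsWithin_mono 0 (by
    intro z hz
    simp only [Set.mem_compl_iff, Set.mem_singleton_iff]
    exact ne_of_gt hz))
  refine h2.congr fun ε => ?_
  rw [slope_def_field, sub_zero]

theorem stmt1
    {𝒳 : Type*} [Fintype 𝒳]
    (P0 P1 : 𝒳 → ℝ)
    (hP0pos : ∀ x, 0 < P0 x) (hP0sum : ∑ x, P0 x = 1)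
    (hP1pos : ∀ x, 0 < P1 x) (hP1sum : ∑ x, P1 x = 1)
    (W : 𝒳 → Bool → ℝ)
    (hWnn : ∀ x y, 0 ≤ W x y) (hWsum : ∀ x, W x false + W x true = 1)
    (Q0 Q1 : Bool → ℝ)
    (hQ0 : ∀ y, Q0 y = ∑ x, P0 x * W x y) (hQ1 : ∀ y, Q1 y = ∑ x, P1 x * W x y)
    (hQ0pos : ∀ y, 0 < Q0 y) (hQ1pos : ∀ y, 0 < Q1 y)
    (l1 l2 l3 l4 : ℝ)
    (hl1 : 0 ≤ l1) (hl2 : 0 ≤ l2) (hl3 : 0 ≤ l3) (hl4 : 0 ≤ l4)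
    (fl : 𝒳 → ℝ)
    (hfl : ∀ x, fl x = Real.log (P0 x / P1 x) - ∑ x', P0 x' * Real.log (P0 x' / P1 x'))
    (gl : Bool → ℝ)
    (hgl : ∀ y, gl y = Real.log (Q0 y / Q1 y) - ∑ y', Q0 y' * Real.log (Q0 y' / Q1 y'))
    (hp1 : Q0 true < 1)
    (gm : Bool → ℝ)
    (hgmf : gm false = Real.sqrt (Q0 true / (1 - Q0 true)))
    (hgmt : gm true = -Real.sqrt ((1 - Q0 true) / Q0 true))
    (ρm : ℝ)
    (hρm : ρm = Real.sqrt (∑ x, P0 x * (gm false * W x false + gm true * W x true) ^ 2))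
    (hρmpos : 0 < ρm)
    (fm : 𝒳 → ℝ)
    (hfm : ∀ x, fm x = (gm false * W x false + gm true * W x true) / ρm)
    (a1 a2 b1 : ℝ)
    (ha1 : a1 = ∑ x, P0 x * (fl x * fm x))
    (ha2 : a2 = Real.sqrt (∑ x, P0 x * (fl x - a1 * fm x) ^ 2))
    (hb1 : b1 = ∑ y, Q0 y * (gl y * gm y))
    (hden : 0 < (l2 * a1 + l4 * ρm * b1) ^ 2 + (l2 * a2) ^ 2)
    (nl nm : ℝ)
    (hnl : nl = -l2 / Real.sqrt ((l2 * a1 + l4 * ρm * b1) ^ 2 + (l2 * a2) ^ 2))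
    (hnm : nm = -(l4 * ρm * b1) / Real.sqrt ((l2 * a1 + l4 * ρm * b1) ^ 2 + (l2 * a2) ^ 2))
    (fstar : 𝒳 → ℝ)
    (hfstar : ∀ x, fstar x = nl * fl x + nm * fm x) :
    ((∑ x, P0 x * fstar x = 0) ∧ (∑ x, P0 x * fstar x ^ 2 = 1)) ∧
      ∀ f : 𝒳 → ℝ, (∑ x, P0 x * f x = 0) → (∑ x, P0 x * f x ^ 2 = 1) →
        ∀ Dstar D : ℝ,
          Tendsto
            (fun ε : ℝ =>
              (Lobj P0 P1 W Q0 Q1 l1 l2 l3 l4 fstar ε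
                - Lobj P0 P1 W Q0 Q1 l1 l2 l3 l4 fstar 0) / ε)
            (nhdsWithin 0 (Set.Ioi 0)) (nhds Dstar) →
          Tendsto
            (fun ε : ℝ =>
              (Lobj P0 P1 W Q0 Q1 l1 l2 l3 l4 f ε
                - Lobj P0 P1 W Q0 Q1 l1 l2 l3 l4 f 0) / ε)
            (nhdsWithin 0 (Set.Ioi 0)) (nhds D) →
          Dstar ≤ D := by
  -- basic facts about Q0
  have hp : 0 < Q0 true := hQ0pos true
  have hq : 0 < Q0 false := hQ0pos false
  have hQsum : Q0 false + Q0 true = 1 := by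
    rw [hQ0 false, hQ0 true, ← Finset.sum_add_distrib, ← hP0sum]
    apply Finset.sum_congr rfl
    intro x _
    linear_combination P0 x * hWsum x
  set sp := Real.sqrt (Q0 true) with hsp_def
  set sq := Real.sqrt (Q0 false) with hsq_def
  have hsp2 : sp ^ 2 = Q0 true := Real.sq_sqrt hp.le
  have hsq2 : sq ^ 2 = Q0 false := Real.sq_sqrt hq.le
  have hsp0 : 0 < sp := Real.sqrt_pos.2 hp
  have hsq0 : 0 < sq := Real.sqrt_pos.2 hq
  have hspne : sp ≠ 0 := hsp0.ne'
  have hsqne : sq ≠ 0 := hsq0.ne'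
  have h1mQ : 1 - Q0 true = Q0 false := by linarith
  have hgmf' : gm false = sp / sq := by
    rw [hgmf, h1mQ, Real.sqrt_div hp.le]
  have hgmt' : gm true = -(sq / sp) := by
    rw [hgmt, h1mQ, Real.sqrt_div hq.le]
  clear_value sp sq
  -- gl is centered under Q0
  have hglc : Q0 false * gl false + Q0 true * gl true = 0 := by
    rw [hgl false, hgl true, Fintype.sum_bool]
    linear_combination (-(Q0 true * Real.log (Q0 true / Q1 true)
      + Q0 false * Real.log (Q0 false / Q1 false))) * hQsum
  have hglc' : sq ^ 2 * gl false + sp ^ 2 * gl true = 0 := by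
    rw [hsp2, hsq2]; exact hglc
  have hQsum' : sq ^ 2 + sp ^ 2 = 1 := by rw [hsp2, hsq2]; exact hQsum
  -- b1 in terms of sp, sq
  have hb1' : b1 = sp * sq * (gl false - gl true) := by
    rw [hb1, Fintype.sum_bool, hgmf', hgmt', ← hsp2, ← hsq2]
    field_simp
    ring
  -- gl is proportional to gm
  have hglgm : ∀ y, gl y = b1 * gm y := by
    intro y
    cases y
    · rw [hgmf', hb1',
        show sp * sq * (gl false - gl true) * (sp / sq) = sp ^ 2 * (gl false - gl true) from by
          field_simp]
      linear_combination (-(gl false)) * hQsum' + hglc'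
    · rw [hgmt', hb1',
        show sp * sq * (gl false - gl true) * (-(sq / sp)) = -(sq ^ 2) * (gl false - gl true) from by
          field_simp]
      linear_combination (-(gl true)) * hQsum' + hglc'
  -- fl is centered
  have hflc : ∑ x, P0 x * fl x = 0 := by
    have h : ∀ x, P0 x * fl x
        = P0 x * Real.log (P0 x / P1 x)
          - (∑ x', P0 x' * Real.log (P0 x' / P1 x')) * P0 x := by
      intro x; rw [hfl]; ring
    rw [Finset.sum_congr rfl fun x _ => h x, Finset.sum_sub_distrib, ← Finset.mul_sum,
      hP0sum, mul_one, sub_self]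
  have hρm_ne : ρm ≠ 0 := hρmpos.ne'
  have hgmW : ∀ x, gm false * W x false + gm true * W x true = ρm * fm x := by
    intro x; rw [hfm]; field_simp
  -- fm is centered
  have hfmc : ∑ x, P0 x * fm x = 0 := by
    have h : ∀ x, P0 x * fm x
        = (gm false * (P0 x * W x false) + gm true * (P0 x * W x true)) / ρm := by
      intro x; rw [hfm]; field_simp
    rw [Finset.sum_congr rfl fun x _ => h x, ← Finset.sum_div, Finset.sum_add_distrib,
      ← Finset.mul_sum, ← Finset.mul_sum, ← hQ0, ← hQ0]
    rw [hgmf', hgmt', ← hsp2, ← hsq2]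
    field_simp
    ring
  -- fm is normalized
  have hEsq_nonneg : 0 ≤ ∑ x, P0 x * (gm false * W x false + gm true * W x true) ^ 2 :=
    Finset.sum_nonneg fun x _ => mul_nonneg (hP0pos x).le (sq_nonneg _)
  have hρm2 : ρm ^ 2 = ∑ x, P0 x * (gm false * W x false + gm true * W x true) ^ 2 := by
    rw [hρm, Real.sq_sqrt hEsq_nonneg]
  have hfm2 : ∑ x, P0 x * fm x ^ 2 = 1 := by
    have h : ∀ x, P0 x * fm x ^ 2
        = P0 x * (gm false * W x false + gm true * W x true) ^ 2 / ρm ^ 2 := by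
      intro x; rw [hfm]; field_simp
    rw [Finset.sum_congr rfl fun x _ => h x, ← Finset.sum_div, ← hρm2]
    field_simp
  -- norm of fl
  have ha2sq : a2 ^ 2 = ∑ x, P0 x * (fl x - a1 * fm x) ^ 2 := by
    rw [ha2, Real.sq_sqrt (Finset.sum_nonneg fun x _ => mul_nonneg (hP0pos x).le (sq_nonneg _))]
  have hSll : ∑ x, P0 x * fl x ^ 2 = a1 ^ 2 + a2 ^ 2 := by
    have hcg : ∑ x, P0 x * (fl x - a1 * fm x) ^ 2
        = ∑ x, P0 x * ((1:ℝ) * fl x + (-a1) * fm x) ^ 2 := by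
      apply Finset.sum_congr rfl; intro x _; ring_nf
    have hexp := sum_sq_comb P0 fl fm 1 (-a1)
    rw [hfm2, ← ha1] at hexp
    linear_combination -ha2sq - hcg - hexp
  set B := l4 * ρm * b1 with hB
  clear_value B
  -- the derivative simplifies on centered directions
  have hΔred : ∀ f : 𝒳 → ℝ, (∑ x, P0 x * f x = 0) →
      (l2 * ∑ x, P0 x * f x * Real.log (P0 x / P1 x)
        + l4 * ∑ y, (∑ x, P0 x * f x * W x y) * Real.log (Q0 y / Q1 y))
      = l2 * (∑ x, P0 x * (f x * fl x)) + B * (∑ x, P0 x * (f x * fm x)) := by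
    intro f hf0
    have ha : ∑ x, P0 x * f x * Real.log (P0 x / P1 x) = ∑ x, P0 x * (f x * fl x) := by
      have h : ∀ x, P0 x * f x * Real.log (P0 x / P1 x)
          = P0 x * (f x * fl x) + (∑ x', P0 x' * Real.log (P0 x' / P1 x')) * (P0 x * f x) := by
        intro x; rw [hfl]; ring
      rw [Finset.sum_congr rfl fun x _ => h x, Finset.sum_add_distrib, ← Finset.mul_sum, hf0,
        mul_zero, add_zero]
    have hccsum : (∑ x, P0 x * f x * W x false) + (∑ x, P0 x * f x * W x true) = 0 := by
      rw [← Finset.sum_add_distrib, ← hf0]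
      apply Finset.sum_congr rfl
      intro x _
      linear_combination (P0 x * f x) * hWsum x
    have hcgm : gm false * (∑ x, P0 x * f x * W x false)
          + gm true * (∑ x, P0 x * f x * W x true)
        = ρm * ∑ x, P0 x * (f x * fm x) := by
      rw [Finset.mul_sum, Finset.mul_sum, ← Finset.sum_add_distrib, Finset.mul_sum]
      apply Finset.sum_congr rfl
      intro x _
      linear_combination (P0 x * f x) * hgmW x
    have hL : ∀ y, Real.log (Q0 y / Q1 y)
        = b1 * gm y + ∑ y', Q0 y' * Real.log (Q0 y' / Q1 y') := by
      intro y
      rw [← hglgm y, hgl y]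
      ring
    have hbsum : ∑ y, (∑ x, P0 x * f x * W x y) * Real.log (Q0 y / Q1 y)
        = ρm * b1 * ∑ x, P0 x * (f x * fm x) := by
      rw [Fintype.sum_bool, hL true, hL false]
      linear_combination b1 * hcgm
        + (∑ y', Q0 y' * Real.log (Q0 y' / Q1 y')) * hccsum
    rw [ha, hbsum, hB]
    ring
  -- normalization constant
  set s := Real.sqrt ((l2 * a1 + B) ^ 2 + (l2 * a2) ^ 2) with hs_def
  have hs2 : s ^ 2 = (l2 * a1 + B) ^ 2 + (l2 * a2) ^ 2 := Real.sq_sqrt hden.le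
  have hspos : 0 < s := Real.sqrt_pos.2 hden
  have hsne : s ≠ 0 := hspos.ne'
  clear_value s
  -- fstar constraints
  have hfstar_sum : ∑ x, P0 x * fstar x = 0 := by
    have hcg : ∑ x, P0 x * fstar x = ∑ x, P0 x * (nl * fl x + nm * fm x) :=
      Finset.sum_congr rfl fun x _ => by rw [hfstar]
    rw [hcg, sum_comb, hflc, hfmc, mul_zero, mul_zero, add_zero]
  have hfstar_sq : ∑ x, P0 x * fstar x ^ 2 = 1 := by
    have hcg : ∑ x, P0 x * fstar x ^ 2 = ∑ x, P0 x * (nl * fl x + nm * fm x) ^ 2 :=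
      Finset.sum_congr rfl fun x _ => by rw [hfstar]
    rw [hcg, sum_sq_comb, hSll, hfm2, ← ha1, hnl, hnm]
    field_simp
    linear_combination -hs2
  refine ⟨⟨hfstar_sum, hfstar_sq⟩, ?_⟩
  intro f hf0 hf2 Dstar D hT1 hT2
  have hTs := lobj_tendsto P0 P1 hP0pos hP1pos W hWsum Q0 Q1 hQ0 hQ0pos hQ1pos
    l1 l2 l3 l4 fstar hfstar_sum
  have hTf := lobj_tendsto P0 P1 hP0pos hP1pos W hWsum Q0 Q1 hQ0 hQ0pos hQ1pos
    l1 l2 l3 l4 f hf0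
  have hDstar : Dstar
      = l2 * (∑ x, P0 x * (fstar x * fl x)) + B * (∑ x, P0 x * (fstar x * fm x)) := by
    rw [← hΔred fstar hfstar_sum]
    exact tendsto_nhds_unique hT1 hTs
  have hDeq : D = l2 * (∑ x, P0 x * (f x * fl x)) + B * (∑ x, P0 x * (f x * fm x)) := by
    rw [← hΔred f hf0]
    exact tendsto_nhds_unique hT2 hTf
  -- Dstar = -s
  have hfl_star : ∑ x, P0 x * (fstar x * fl x) = nl * (a1 ^ 2 + a2 ^ 2) + nm * a1 := by
    have hcg : ∑ x, P0 x * (fstar x * fl x)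
        = ∑ x, P0 x * ((nl * fl x + nm * fm x) * fl x) :=
      Finset.sum_congr rfl fun x _ => by rw [hfstar]
    rw [hcg, sum_mul_comb]
    have e1 : ∑ x, P0 x * (fl x * fl x) = a1 ^ 2 + a2 ^ 2 := by
      rw [← hSll]; apply Finset.sum_congr rfl; intro x _; ring
    have e2 : ∑ x, P0 x * (fm x * fl x) = a1 := by
      rw [ha1]; apply Finset.sum_congr rfl; intro x _; ring
    rw [e1, e2]
  have hfm_star : ∑ x, P0 x * (fstar x * fm x) = nl * a1 + nm := by
    have hcg : ∑ x, P0 x * (fstar x * fm x)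
        = ∑ x, P0 x * ((nl * fl x + nm * fm x) * fm x) :=
      Finset.sum_congr rfl fun x _ => by rw [hfstar]
    rw [hcg, sum_mul_comb, ← ha1]
    have e2 : ∑ x, P0 x * (fm x * fm x) = 1 := by
      rw [← hfm2]; apply Finset.sum_congr rfl; intro x _; ring
    rw [e2, mul_one]
  have hDstar' : Dstar = -s := by
    rw [hDstar, hfl_star, hfm_star, hnl, hnm]
    field_simp
    linear_combination hs2
  -- D ≥ -s via Cauchy–Schwarz
  have hDφ : D = ∑ x, P0 x * (f x * (l2 * fl x + B * fm x)) := by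
    rw [hDeq]
    have hcg : ∑ x, P0 x * (f x * (l2 * fl x + B * fm x))
        = ∑ x, P0 x * ((l2 * fl x + B * fm x) * f x) :=
      Finset.sum_congr rfl fun x _ => by ring
    rw [hcg, sum_mul_comb]
    have e1 : ∑ x, P0 x * (fl x * f x) = ∑ x, P0 x * (f x * fl x) :=
      Finset.sum_congr rfl fun x _ => by ring
    have e2 : ∑ x, P0 x * (fm x * f x) = ∑ x, P0 x * (f x * fm x) :=
      Finset.sum_congr rfl fun x _ => by ring
    rw [e1, e2]
  have hφ2 : ∑ x, P0 x * (l2 * fl x + B * fm x) ^ 2 = s ^ 2 := by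
    rw [sum_sq_comb, hSll, hfm2, ← ha1, hs2]
    ring
  have hCS : (∑ x, P0 x * (f x * (l2 * fl x + B * fm x))) ^ 2 ≤ s ^ 2 := by
    have h := Finset.sum_mul_sq_le_sq_mul_sq Finset.univ
      (fun x => Real.sqrt (P0 x) * f x)
      (fun x => Real.sqrt (P0 x) * (l2 * fl x + B * fm x))
    have e0 : ∀ x : 𝒳, Real.sqrt (P0 x) * Real.sqrt (P0 x) = P0 x :=
      fun x => Real.mul_self_sqrt (hP0pos x).le
    have e1 : ∑ x, (Real.sqrt (P0 x) * f x) * (Real.sqrt (P0 x) * (l2 * fl x + B * fm x))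
        = ∑ x, P0 x * (f x * (l2 * fl x + B * fm x)) := by
      apply Finset.sum_congr rfl; intro x _
      rw [show (Real.sqrt (P0 x) * f x) * (Real.sqrt (P0 x) * (l2 * fl x + B * fm x))
          = (Real.sqrt (P0 x) * Real.sqrt (P0 x)) * (f x * (l2 * fl x + B * fm x)) from by ring,
        e0 x]
    have e2 : ∑ x, (Real.sqrt (P0 x) * f x) ^ 2 = ∑ x, P0 x * f x ^ 2 := by
      apply Finset.sum_congr rfl; intro x _
      rw [show (Real.sqrt (P0 x) * f x) ^ 2
          = (Real.sqrt (P0 x) * Real.sqrt (P0 x)) * f x ^ 2 from by ring, e0 x]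
    have e3 : ∑ x, (Real.sqrt (P0 x) * (l2 * fl x + B * fm x)) ^ 2
        = ∑ x, P0 x * (l2 * fl x + B * fm x) ^ 2 := by
      apply Finset.sum_congr rfl; intro x _
      rw [show (Real.sqrt (P0 x) * (l2 * fl x + B * fm x)) ^ 2
          = (Real.sqrt (P0 x) * Real.sqrt (P0 x)) * (l2 * fl x + B * fm x) ^ 2 from by ring,
        e0 x]
    rw [e1, e2, e3, hf2, hφ2, one_mul] at h
    exact h
  rw [hDstar', hDφ]
  have h1 : |∑ x, P0 x * (f x * (l2 * fl x + B * fm x))| ≤ s := by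
    have h2 := Real.sqrt_le_sqrt hCS
    rwa [Real.sqrt_sq_eq_abs, Real.sqrt_sq hspos.le] at h2
  linarith [neg_abs_le (∑ x, P0 x * (f x * (l2 * fl x + B * fm x))), h1]
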